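/- arXiv:1005.3970 — 2 statements merged into one kernel-verified Lean document; each statement's English description precedes it below -/
import Mathlib

section
/- Let (g,B) be a reduced singular quadratic Lie algebra. Then the dimension of the vector space of all invariant symmetric bilinear forms on g (i.e. symmetric bilinear forms B' with B'([X,Y],Z) = B'(X,[Y,Z]) for all X,Y,Z in g) equals 1 + dim Z(g)·(1 + dim Z(g))/2, where Z(g) is the center of g. -/
/-- The space of linear functionals `α` on `g` with `α ∧ I = 0`, where
`I(X,Y,Z) = B([X,Y],Z)` is the canonical 3-form of the quadratic Lie algebra `(g,B)`. -/
def dupSubmodule {g : Type*} [LieRing g] [LieAlgebra ℂ g]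
    (B : LinearMap.BilinForm ℂ g) : Submodule ℂ (Module.Dual ℂ g) where
  carrier := {α | ∀ X Y Z T : g,
    α X * B ⁅Y, Z⁆ T - α Y * B ⁅X, Z⁆ T + α Z * B ⁅X, Y⁆ T - α T * B ⁅X, Y⁆ Z = 0}
  add_mem' := by
    intro a b ha hb X Y Z T
    have h1 := ha X Y Z T
    have h2 := hb X Y Z T
    simp only [LinearMap.add_apply]
    linear_combination h1 + h2
  zero_mem' := by intro X Y Z T; simp
  smul_mem' := by
    intro c a ha X Y Z T
    have h := ha X Y Z T
    simp only [LinearMap.smul_apply, smul_eq_mul]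
    linear_combination c * h

/-- The dup-number of a quadratic Lie algebra `(g,B)`:
the dimension of `{α ∈ g* | α ∧ I = 0}`. -/
noncomputable def dup {g : Type*} [LieRing g] [LieAlgebra ℂ g]
    (B : LinearMap.BilinForm ℂ g) : ℕ :=
  Module.finrank ℂ (dupSubmodule B)

/-- The space of invariant symmetric bilinear forms on a Lie algebra `g`. -/
def invariantSymmetricForms (g : Type*) [LieRing g] [LieAlgebra ℂ g] :
    Submodule ℂ (LinearMap.BilinForm ℂ g) where
  carrier := {B' | (∀ x y : g, B' x y = B' y x) ∧
    ∀ x y z : g, B' ⁅x, y⁆ z = B' x ⁅y, z⁆}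
  add_mem' := by
    rintro a b ⟨has, hai⟩ ⟨hbs, hbi⟩
    constructor
    · intro x y
      simp only [LinearMap.add_apply, has x y, hbs x y]
    · intro x y z
      simp only [LinearMap.add_apply, hai x y z, hbi x y z]
  zero_mem' := ⟨fun x y => by simp, fun x y z => by simp⟩
  smul_mem' := by
    rintro c a ⟨has, hai⟩
    constructor
    · intro x y
      simp only [LinearMap.smul_apply, has x y]
    · intro x y z
      simp only [LinearMap.smul_apply, hai x y z]


open Module

set_option linter.unusedSectionVars false

/-- The submodule of symmetric bilinear forms on a vector space. -/
def symForms (V : Type*) [AddCommGroup V] [Module ℂ V] :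
    Submodule ℂ (LinearMap.BilinForm ℂ V) where
  carrier := {β | ∀ x y : V, β x y = β y x}
  add_mem' := by
    intro a b ha hb x y
    simp only [LinearMap.add_apply, ha x y, hb x y]
  zero_mem' := by intro x y; simp
  smul_mem' := by
    intro c a ha x y
    simp only [LinearMap.smul_apply, ha x y]

theorem mem_symForms {V : Type*} [AddCommGroup V] [Module ℂ V]
    (β : LinearMap.BilinForm ℂ V) : β ∈ symForms V ↔ ∀ x y : V, β x y = β y x := Iff.rfl

theorem finrank_symForms (V : Type*) [AddCommGroup V] [Module ℂ V] [FiniteDimensional ℂ V] :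
    Module.finrank ℂ (symForms V) = (Module.finrank ℂ V + 1).choose 2 := by
  classical
  set n := Module.finrank ℂ V with hn
  let b : Basis (Fin n) ℂ V := Module.finBasis ℂ V
  let E : (symForms V) →ₗ[ℂ] (Sym2 (Fin n) → ℂ) :=
    { toFun := fun β => Sym2.lift ⟨fun i j => β.1 (b i) (b j), fun i j => β.2 (b i) (b j)⟩
      map_add' := by
        intro β₁ β₂
        funext s
        induction s using Sym2.ind with
        | _ i j => simp [Sym2.lift_mk]
      map_smul' := by
        intro c β
        funext s
        induction s using Sym2.ind with
        | _ i j => simp [Sym2.lift_mk] }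
  have hinj : Function.Injective E := by
    rw [injective_iff_map_eq_zero]
    intro β hβ
    apply Subtype.ext
    apply b.ext
    intro i
    apply b.ext
    intro j
    have := congrFun hβ (s(i, j))
    simpa [E, Sym2.lift_mk] using this
  have hsurj : Function.Surjective E := by
    intro f
    set M : LinearMap.BilinForm ℂ V :=
      ∑ i : Fin n, ∑ j : Fin n, f (s(i, j)) • ((b.coord i).smulRight (b.coord j)) with hM
    have happly : ∀ x y : V, M x y =
        ∑ i : Fin n, ∑ j : Fin n, f (s(i, j)) * (b.coord i x * b.coord j y) := by
      intro x y
      simp [hM, LinearMap.sum_apply, Finset.sum_apply, mul_assoc]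
    have hbasis : ∀ p q : Fin n, M (b p) (b q) = f (s(p, q)) := by
      intro p q
      rw [happly]
      simp [Basis.coord_apply, Basis.repr_self, Finsupp.single_apply]
    have hMsym : M ∈ symForms V := by
      intro x y
      rw [happly, happly, Finset.sum_comm]
      refine Finset.sum_congr rfl fun a _ => Finset.sum_congr rfl fun c _ => ?_
      rw [Sym2.eq_swap (a := c) (b := a)]
      ring
    refine ⟨⟨M, hMsym⟩, ?_⟩
    funext s
    induction s using Sym2.ind with
    | _ i j => simpa [E, Sym2.lift_mk] using hbasis i j
  have h2 : Module.finrank ℂ (symForms V) = Module.finrank ℂ (Sym2 (Fin n) → ℂ) :=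
    LinearEquiv.finrank_eq (LinearEquiv.ofBijective E ⟨hinj, hsurj⟩)
  rw [h2, Module.finrank_fintype_fun_eq_card, Sym2.card, Fintype.card_fin]

theorem key_scalar {g : Type*} [LieRing g] [LieAlgebra ℂ g] [Module.Finite ℂ g]
    (B : LinearMap.BilinForm ℂ g)
    (hsymm : ∀ x y : g, B x y = B y x)
    (hnondeg : B.Nondegenerate)
    (hinv : ∀ x y z : g, B ⁅x, y⁆ z = B x ⁅y, z⁆)
    (hnonabelian : ¬ ∀ x y : g, ⁅x, y⁆ = 0)
    (α : Module.Dual ℂ g) (hαmem : α ∈ dupSubmodule B) (hαne : α ≠ 0)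
    (B' : LinearMap.BilinForm ℂ g)
    (hB's : ∀ x y : g, B' x y = B' y x)
    (hB'i : ∀ x y z : g, B' ⁅x, y⁆ z = B' x ⁅y, z⁆) :
    ∃ c : ℂ, ∀ x y z : g, B' x ⁅y, z⁆ = c * B x ⁅y, z⁆ := by
  classical
  -- find e with α e = 1
  obtain ⟨e₀, he₀⟩ : ∃ e₀ : g, α e₀ ≠ 0 := by
    by_contra h
    push_neg at h
    exact hαne (LinearMap.ext fun x => h x)
  set e : g := (α e₀)⁻¹ • e₀ with he_def
  have he : α e = 1 := by
    rw [he_def, map_smul, smul_eq_mul, inv_mul_cancel₀ he₀]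
  -- X₀ realizing α via B
  set X₀ : g := (LinearMap.BilinForm.toDual B hnondeg).symm α with hX₀def
  have hX₀ : ∀ z : g, B X₀ z = α z := fun z =>
    LinearMap.BilinForm.apply_toDual_symm_apply (hB := hnondeg) α z
  -- skew symmetry of C := ad e relative to B
  have hskew : ∀ a b : g, B ⁅e, a⁆ b = - B ⁅e, b⁆ a := by
    intro a b
    rw [hinv e a b, hinv e b a, hsymm e ⁅a, b⁆, hsymm e ⁅b, a⁆, ← lie_skew a b,
      map_neg, LinearMap.neg_apply]
  have hswap : ∀ a b : g, B ⁅a, b⁆ e = B ⁅e, a⁆ b := by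
    intro a b
    rw [hinv e a b, hsymm e ⁅a, b⁆]
  -- the structure identity (★) scalar form
  have hstar : ∀ x y z : g,
      B ⁅x, y⁆ z = α x * B ⁅e, y⁆ z - α y * B ⁅e, x⁆ z + B ⁅e, x⁆ y * α z := by
    intro x y z
    have h := hαmem x y z e
    rw [he, hswap y z, hswap x z, hswap x y] at h
    linear_combination -h
  -- the structure identity, vector form
  have hstarvec : ∀ x y : g,
      ⁅x, y⁆ = α x • ⁅e, y⁆ - α y • ⁅e, x⁆ + (B ⁅e, x⁆ y) • X₀ := by
    intro x y
    have hz : ∀ z : g, B (⁅x, y⁆ - (α x • ⁅e, y⁆ - α y • ⁅e, x⁆ + (B ⁅e, x⁆ y) • X₀)) z = 0 := by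
      intro z
      simp only [map_sub, map_add, map_smul, LinearMap.sub_apply, LinearMap.add_apply,
        LinearMap.smul_apply, smul_eq_mul, hX₀]
      linear_combination hstar x y z
    have := hnondeg.1 _ hz
    rwa [sub_eq_zero] at this
  -- B' e ⁅e, z⁆ = 0
  have hB'e : ∀ z : g, B' e ⁅e, z⁆ = 0 := by
    intro z
    have h := hB'i e e z
    rw [lie_self] at h
    simpa using h.symm
  set c : ℂ := B' e X₀ with hc
  -- B' agrees with c • B on elements ⁅e, y⁆
  have hBC : ∀ y z : g, B' ⁅e, y⁆ z = c * B ⁅e, y⁆ z := by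
    intro y z
    have h1 : B' ⁅e, y⁆ z = B' e ⁅y, z⁆ := hB'i e y z
    rw [hstarvec y z] at h1
    simp only [map_sub, map_add, map_smul, LinearMap.sub_apply, LinearMap.add_apply,
      LinearMap.smul_apply, smul_eq_mul] at h1
    rw [hB'e z, hB'e y] at h1
    rw [h1]; ring
  have hB'skew : ∀ x z : g, B' x ⁅e, z⁆ = - B' ⁅e, x⁆ z := by
    intro x z
    have h := hB'i x e z
    rw [← lie_skew x e, map_neg, LinearMap.neg_apply] at h
    exact h.symm
  -- the deficiency functional δ
  set δ : g → ℂ := fun x => B' x X₀ - c * α x with hδdef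
  -- the key relation (R)
  have hR : ∀ x y z : g, B ⁅e, x⁆ y * δ z = B ⁅e, y⁆ z * δ x := by
    intro x y z
    have h1 := hB'i x y z
    rw [hstarvec x y, hstarvec y z] at h1
    simp only [map_sub, map_add, map_smul, LinearMap.sub_apply, LinearMap.add_apply,
      LinearMap.smul_apply, smul_eq_mul] at h1
    rw [hBC y z, hBC x z, hB'skew x z, hBC x z, hB'skew x y, hBC x y, hB's X₀ z] at h1
    simp only [hδdef]
    linear_combination h1
  -- C ≠ 0
  obtain ⟨a₀, b₀, hab⟩ : ∃ a b : g, B ⁅e, a⁆ b ≠ 0 := by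
    by_contra h
    push_neg at h
    apply hnonabelian
    intro x y
    have hC : ∀ a : g, ⁅e, a⁆ = 0 := fun a => hnondeg.1 _ (h a)
    rw [hstarvec x y, hC x, hC y]
    simp
  -- δ vanishes
  have hδ0 : ∀ x : g, δ x = 0 := by
    intro x
    by_contra hx
    have hCx : ∀ y : g, B ⁅e, x⁆ y = 0 := by
      intro y
      have h := hR x y x
      rw [hskew y x] at h
      have h2 : (2 * B ⁅e, x⁆ y) * δ x = 0 := by linear_combination h
      rcases mul_eq_zero.mp h2 with h3 | h3
      · rcases mul_eq_zero.mp h3 with h4 | h4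
        · exact absurd h4 two_ne_zero
        · exact h4
      · exact absurd h3 hx
    have h := hR x a₀ b₀
    rw [hCx a₀] at h
    have : B ⁅e, a₀⁆ b₀ * δ x = 0 := by linear_combination -h
    rcases mul_eq_zero.mp this with h3 | h3
    · exact hab h3
    · exact hx h3
  -- conclusion
  refine ⟨c, fun x y z => ?_⟩
  have hexp : B' x ⁅y, z⁆ = α y * B' x ⁅e, z⁆ - α z * B' x ⁅e, y⁆ + B ⁅e, y⁆ z * B' x X₀ := by
    rw [hstarvec y z]
    simp only [map_sub, map_add, map_smul, smul_eq_mul]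
  have hBX : B' x X₀ = c * α x := by
    have := hδ0 x
    simp only [hδdef] at this
    linear_combination this
  rw [hexp, hB'skew x z, hBC x z, hB'skew x y, hBC x y, hBX, hsymm x ⁅y, z⁆, hstar y z x]
  linear_combination (-(c * α y)) * hskew z x + (c * α z) * hskew y x


section MainAux

variable {g : Type*} [LieRing g] [LieAlgebra ℂ g] [Module.Finite ℂ g]

def derivedSub (g : Type*) [LieRing g] [LieAlgebra ℂ g] : Submodule ℂ g :=
  Submodule.span ℂ {w : g | ∃ y z : g, ⁅y, z⁆ = w}


/-- The submodule of symmetric forms vanishing on brackets. -/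
def trivForms (g : Type*) [LieRing g] [LieAlgebra ℂ g] : Submodule ℂ (LinearMap.BilinForm ℂ g) where
  carrier := {β | (∀ x y : g, β x y = β y x) ∧ ∀ x y z : g, β x ⁅y, z⁆ = 0}
  add_mem' := by
    rintro a b ⟨has, hai⟩ ⟨hbs, hbi⟩
    exact ⟨fun x y => by simp only [LinearMap.add_apply, has x y, hbs x y],
      fun x y z => by simp only [LinearMap.add_apply, hai x y z, hbi x y z, add_zero]⟩
  zero_mem' := ⟨fun x y => by simp, fun x y z => by simp⟩
  smul_mem' := by
    rintro c a ⟨has, hai⟩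
    exact ⟨fun x y => by simp only [LinearMap.smul_apply, has x y],
      fun x y z => by simp only [LinearMap.smul_apply, hai x y z, smul_zero]⟩

set_option synthInstance.maxHeartbeats 1000000 in
set_option maxHeartbeats 1000000 in
theorem finrank_trivForms :
    Module.finrank ℂ (trivForms g) = Module.finrank ℂ (symForms (g ⧸ derivedSub g)) := by
  classical
  set d := derivedSub g with hd
  set π : g →ₗ[ℂ] g ⧸ d := d.mkQ with hπ
  have hπsurj : Function.Surjective π := Submodule.mkQ_surjective d
  -- the pullback linear map
  let P : LinearMap.BilinForm ℂ (g ⧸ d) →ₗ[ℂ] LinearMap.BilinForm ℂ g :=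
    { toFun := fun β => β.compl₁₂ π π
      map_add' := by intro β₁ β₂; ext x y; simp [LinearMap.compl₁₂_apply]
      map_smul' := by intro a β; ext x y; simp [LinearMap.compl₁₂_apply] }
  have hPmem : ∀ β : symForms (g ⧸ d), P β.1 ∈ trivForms g := by
    rintro ⟨β, hβ⟩
    constructor
    · intro x y
      exact hβ (π x) (π y)
    · intro x y z
      have hzero : π ⁅y, z⁆ = 0 := by
        rw [hπ, Submodule.mkQ_apply, Submodule.Quotient.mk_eq_zero]
        exact Submodule.subset_span ⟨y, z, rfl⟩
      simp only [P, LinearMap.coe_mk, AddHom.coe_mk, LinearMap.compl₁₂_apply, hzero, map_zero]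
  let Φ : symForms (g ⧸ d) →ₗ[ℂ] trivForms g :=
    { toFun := fun β => ⟨P β.1, hPmem β⟩
      map_add' := by intro β₁ β₂; ext x y; simp [P, LinearMap.compl₁₂_apply]
      map_smul' := by intro a β; ext x y; simp [P, LinearMap.compl₁₂_apply] }
  have hinj : Function.Injective Φ := by
    rw [injective_iff_map_eq_zero]
    rintro ⟨β, hβ⟩ h
    have h' : ∀ x y : g, β (π x) (π y) = 0 := by
      intro x y
      have := congrArg (fun v : trivForms g => v.1 x y) h
      simpa [Φ, P, LinearMap.compl₁₂_apply] using this
    apply Subtype.ext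
    ext u v
    exact h' u v
  have hsurj : Function.Surjective Φ := by
    rintro ⟨B', hB's, hB'v⟩
    -- B' vanishes on d in the first slot
    have hleft : ∀ w ∈ d, B' w = 0 := by
      intro w hw
      induction hw using Submodule.span_induction with
      | mem w hw =>
          obtain ⟨y, z, rfl⟩ := hw
          ext x
          rw [LinearMap.zero_apply, hB's, hB'v]
      | zero => simp
      | add u v _ _ hu hv => rw [map_add, hu, hv, add_zero]
      | smul a u _ hu => rw [map_smul, hu, smul_zero]
    -- lift in the first argument
    have hF : ∀ x : g, ∀ w ∈ d, B' x w = 0 := by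
      intro x w hw
      rw [hB's]
      rw [hleft w hw]
      simp
    let F : g →ₗ[ℂ] (g ⧸ d) →ₗ[ℂ] ℂ :=
      { toFun := fun x => d.liftQ (B' x) (by
          intro w hw
          simp only [LinearMap.mem_ker]
          exact hF x w hw)
        map_add' := by
          intro x₁ x₂
          apply LinearMap.ext
          intro u
          obtain ⟨y, rfl⟩ := hπsurj u
          simp [hπ, Submodule.liftQ_apply]
        map_smul' := by
          intro a x
          apply LinearMap.ext
          intro u
          obtain ⟨y, rfl⟩ := hπsurj u
          simp [hπ, Submodule.liftQ_apply] }
    have hFd : ∀ w ∈ d, F w = 0 := by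
      intro w hw
      apply LinearMap.ext
      intro u
      obtain ⟨y, rfl⟩ := hπsurj u
      simp [F, hπ, Submodule.liftQ_apply, hleft w hw]
    let β : LinearMap.BilinForm ℂ (g ⧸ d) := d.liftQ F (by
      intro w hw
      simp only [LinearMap.mem_ker]
      exact hFd w hw)
    have hβval : ∀ x y : g, β (π x) (π y) = B' x y := by
      intro x y
      simp [β, F, hπ, Submodule.liftQ_apply]
    have hβsym : β ∈ symForms (g ⧸ d) := by
      intro u v
      obtain ⟨x, rfl⟩ := hπsurj u
      obtain ⟨y, rfl⟩ := hπsurj v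
      rw [hβval, hβval, hB's]
    refine ⟨⟨β, hβsym⟩, ?_⟩
    apply Subtype.ext
    ext x y
    simpa [Φ, P, LinearMap.compl₁₂_apply] using hβval x y
  exact (LinearEquiv.finrank_eq (LinearEquiv.ofBijective Φ ⟨hinj, hsurj⟩)).symm


theorem center_eq_orthogonal (B : LinearMap.BilinForm ℂ g)
    (hsymm : ∀ x y : g, B x y = B y x)
    (hnondeg : B.Nondegenerate)
    (hinv : ∀ x y z : g, B ⁅x, y⁆ z = B x ⁅y, z⁆) :
    (LieAlgebra.center ℂ g).toSubmodule = B.orthogonal (derivedSub g) := by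
  ext x
  show x ∈ LieAlgebra.center ℂ g ↔ x ∈ B.orthogonal (derivedSub g)
  constructor
  · intro hx
    rw [LinearMap.BilinForm.mem_orthogonal_iff]
    intro n hn
    induction hn using Submodule.span_induction with
    | mem w hw =>
        obtain ⟨y, z, rfl⟩ := hw
        show B ⁅y, z⁆ x = 0
        rw [hinv]
        have hzx : ⁅z, x⁆ = 0 := (LieModule.mem_maxTrivSubmodule ℂ g g x).mp hx z
        rw [hzx, map_zero]
    | zero => show B 0 x = 0; simp
    | add u v _ _ hu hv =>
        show B (u + v) x = 0
        rw [map_add, LinearMap.add_apply, hu, hv, add_zero]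
    | smul a u _ hu =>
        show B (a • u) x = 0
        rw [map_smul, LinearMap.smul_apply, hu, smul_zero]
  · intro hx
    rw [LieModule.mem_maxTrivSubmodule]
    intro y
    apply hnondeg.1
    intro n
    have hmem : ⁅n, y⁆ ∈ derivedSub g := Submodule.subset_span ⟨n, y, rfl⟩
    have h0 : B ⁅n, y⁆ x = 0 := (LinearMap.BilinForm.mem_orthogonal_iff.mp hx) _ hmem
    rw [hsymm, ← hinv, h0]

theorem finrank_center_eq (B : LinearMap.BilinForm ℂ g)
    (hsymm : ∀ x y : g, B x y = B y x)
    (hnondeg : B.Nondegenerate)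
    (hinv : ∀ x y z : g, B ⁅x, y⁆ z = B x ⁅y, z⁆) :
    Module.finrank ℂ ↥(LieAlgebra.center ℂ g) = Module.finrank ℂ (g ⧸ derivedSub g) := by
  have h1 : Module.finrank ℂ ↥(LieAlgebra.center ℂ g)
      = Module.finrank ℂ (B.orthogonal (derivedSub g)) := by
    rw [← center_eq_orthogonal B hsymm hnondeg hinv]
    rfl
  have hrefl : B.IsRefl := fun x y h => by rw [hsymm]; exact h
  have h2 := LinearMap.BilinForm.finrank_orthogonal hnondeg (derivedSub g)
  have h3 := Submodule.finrank_quotient_add_finrank (derivedSub g)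
  have h4 : Module.finrank ℂ (derivedSub g) ≤ Module.finrank ℂ g :=
    Submodule.finrank_le _
  rw [h1, h2]
  omega


end MainAux

/-- For a reduced singular quadratic Lie algebra `(g,B)`, the quadratic
dimension (the dimension of the space of invariant symmetric bilinear forms) equals
`1 + dim Z(g)·(1 + dim Z(g))/2`. -/
theorem quadratic_dimension_of_reduced_singular
    {g : Type*} [LieRing g] [LieAlgebra ℂ g] [Module.Finite ℂ g]
    (B : LinearMap.BilinForm ℂ g)
    (hsymm : ∀ x y : g, B x y = B y x)
    (hnondeg : B.Nondegenerate)
    (hinv : ∀ x y z : g, B ⁅x, y⁆ z = B x ⁅y, z⁆)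
    (hnonabelian : ¬ ∀ x y : g, ⁅x, y⁆ = 0)
    (hsingular : 1 ≤ dup B)
    (hreduced : ∀ x ∈ LieAlgebra.center ℂ g, ∀ y ∈ LieAlgebra.center ℂ g, B x y = 0)
    [Nontrivial g] :
    Module.finrank ℂ (invariantSymmetricForms g) =
      1 + Module.finrank ℂ ↥(LieAlgebra.center ℂ g) *
        (1 + Module.finrank ℂ ↥(LieAlgebra.center ℂ g)) / 2 := by
  classical
  -- obtain a nonzero element of the dup space
  obtain ⟨α, hαmem, hαne⟩ : ∃ α ∈ dupSubmodule B, α ≠ 0 := by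
    by_contra h
    push_neg at h
    have hbot : dupSubmodule B = ⊥ := by
      rw [Submodule.eq_bot_iff]
      exact h
    rw [dup, hbot] at hsingular
    simp [finrank_bot] at hsingular
  have hBmem : B ∈ invariantSymmetricForms g := ⟨hsymm, hinv⟩
  have hBne : B ≠ 0 := hnondeg.ne_zero
  -- decomposition of the space of invariant symmetric forms
  have hsup : invariantSymmetricForms g = (Submodule.span ℂ {B}) ⊔ trivForms g := by
    apply le_antisymm
    · intro B' hB'
      obtain ⟨c, hc⟩ := key_scalar B hsymm hnondeg hinv hnonabelian α hαmem hαne B' hB'.1 hB'.2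
      rw [Submodule.mem_sup]
      refine ⟨c • B, Submodule.smul_mem _ _ (Submodule.mem_span_singleton_self B),
        B' - c • B, ⟨?_, ?_⟩, by abel⟩
      · intro x y
        simp only [LinearMap.sub_apply, LinearMap.smul_apply, smul_eq_mul, hB'.1 x y, hsymm x y]
      · intro x y z
        simp only [LinearMap.sub_apply, LinearMap.smul_apply, smul_eq_mul, hc x y z, sub_self]
    · refine sup_le ?_ ?_
      · rw [Submodule.span_le, Set.singleton_subset_iff]
        exact hBmem
      · rintro β ⟨hs, hv⟩
        refine ⟨hs, fun x y z => ?_⟩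
        rw [hv x y z, hs ⁅x, y⁆ z, hv z x y]
  have hinf : (Submodule.span ℂ {B}) ⊓ trivForms g = ⊥ := by
    rw [Submodule.eq_bot_iff]
    rintro β ⟨hβ1, hβ2⟩
    obtain ⟨a, rfl⟩ := Submodule.mem_span_singleton.mp hβ1
    obtain ⟨x₀, y₀, hxy⟩ : ∃ x y : g, ⁅x, y⁆ ≠ 0 := by
      by_contra h
      push_neg at h
      exact hnonabelian h
    obtain ⟨w, hw⟩ : ∃ w : g, B w ⁅x₀, y₀⁆ ≠ 0 := by
      by_contra h
      push_neg at h
      apply hxy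
      apply hnondeg.1
      intro n
      rw [hsymm]
      exact h n
    have h0 : a * B w ⁅x₀, y₀⁆ = 0 := by
      have := hβ2.2 w x₀ y₀
      simpa using this
    have ha : a = 0 := by
      rcases mul_eq_zero.mp h0 with h | h
      · exact h
      · exact absurd h hw
    rw [ha, zero_smul]
  -- the dimension count
  have hrank := Submodule.finrank_sup_add_finrank_inf_eq (Submodule.span ℂ {B}) (trivForms g)
  rw [hinf, finrank_bot, add_zero, finrank_span_singleton hBne] at hrank
  have hk : Module.finrank ℂ ↥(LieAlgebra.center ℂ g)
      = Module.finrank ℂ (g ⧸ derivedSub g) := finrank_center_eq B hsymm hnondeg hinv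
  have htriv : Module.finrank ℂ (trivForms g)
      = (Module.finrank ℂ ↥(LieAlgebra.center ℂ g) + 1).choose 2 := by
    rw [finrank_trivForms, finrank_symForms, hk]
  rw [hsup, hrank, htriv]
  set k := Module.finrank ℂ ↥(LieAlgebra.center ℂ g)
  rw [Nat.choose_two_right]
  congr 1
  have h5 : (k + 1) * (k + 1 - 1) = k * (1 + k) := by
    simp only [Nat.add_sub_cancel]
    ring
  rw [h5]
end

section
/- Let (g,B) and (g',B') be non-Abelian quadratic Lie algebras. If g and g' are isomorphic as complex Lie algebras, then dup(g) = dup(g'). -/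
open Polynomial

lemma mem_dupSubmodule {g : Type*} [LieRing g] [LieAlgebra ℂ g]
    {B : LinearMap.BilinForm ℂ g} {α : Module.Dual ℂ g} :
    α ∈ dupSubmodule B ↔ ∀ X Y Z T : g,
      α X * B ⁅Y, Z⁆ T - α Y * B ⁅X, Z⁆ T + α Z * B ⁅X, Y⁆ T - α T * B ⁅X, Y⁆ Z = 0 :=
  Iff.rfl

/-- Universal truncated cube root of `1 + X`. -/
lemma trunc_cbrt (k : ℕ) :
    ∃ s u : ℂ[X], s.coeff 0 = 1 ∧ s ^ 3 = 1 + X + X ^ (k + 1) * u := by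
  induction k with
  | zero =>
    refine ⟨1, -1, by simp, by ring⟩
  | succ k ih =>
    obtain ⟨s, u, hs0, hu⟩ := ih
    set c3 : ℂ := u.coeff 0 / 3 with hc3
    have hXu : X ∣ u - 3 * C c3 := by
      have h3 : (3 : ℂ[X]) * C c3 = C (3 * c3) := by rw [C_mul, map_ofNat]
      rw [X_dvd_iff, h3, coeff_sub, coeff_C_zero, hc3]
      ring
    obtain ⟨u1, hu1⟩ := hXu
    have hXs : X ∣ s - 1 := by
      rw [X_dvd_iff]; simp [hs0]
    obtain ⟨w, hw⟩ := hXs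
    refine ⟨s - C c3 * X ^ (k + 1),
      u1 - 3 * C c3 * (2 * w + X * w ^ 2) + X ^ k * (C c3) ^ 2 * (3 * s - C c3 * X ^ (k + 1)),
      ?_, ?_⟩
    · simp [coeff_X_pow, hs0]
    · linear_combination hu + X ^ (k + 1) * hu1 -
        3 * X ^ (k + 1) * C c3 * (1 + X * w + s) * hw

/-- Cube root of `1 + n` for `n` nilpotent in a commutative `ℂ`-algebra. -/
lemma nilpotent_cbrt {A : Type*} [CommRing A] [Algebra ℂ A] (n : A) (k : ℕ)
    (h : n ^ (k + 1) = 0) : ∃ s : A, s ^ 3 = 1 + n := by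
  obtain ⟨s, u, -, hu⟩ := trunc_cbrt k
  refine ⟨aeval n s, ?_⟩
  have h2 := congrArg (aeval n) hu
  simp only [map_pow, map_add, map_one, map_mul, aeval_X] at h2
  rw [h2, h]
  ring

/-- Every injective endomorphism of a nontrivial finite-dimensional complex vector space
has a cube root which is a polynomial in it. -/
lemma exists_cbrt_poly {V : Type*} [AddCommGroup V] [Module ℂ V]
    [Module.Finite ℂ V] [Nontrivial V] (D : Module.End ℂ V)
    (hD : Function.Injective D) :
    ∃ p : ℂ[X], (aeval D p) ^ 3 = D := by
  classical
  haveI : FiniteDimensional ℂ V := ‹Module.Finite ℂ V›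
  have hint : IsIntegral ℂ D := Algebra.IsIntegral.isIntegral D
  set m := minpoly ℂ D with hm
  have hmne : m ≠ 0 := minpoly.ne_zero hint
  have hmonic : m.Monic := minpoly.monic hint
  have hm0 : m.coeff 0 ≠ 0 := by
    intro h0
    obtain ⟨t, ht⟩ : X ∣ m := X_dvd_iff.mpr h0
    have htne : t ≠ 0 := by
      rintro rfl
      rw [mul_zero] at ht
      exact hmne ht
    have haev : aeval D m = 0 := minpoly.aeval ℂ D
    rw [ht, map_mul, aeval_X] at haev
    have ht0 : aeval D t = 0 := by
      apply LinearMap.ext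
      intro v
      have h1 : D ((aeval D t) v) = 0 := by
        have := congrArg (fun (f : Module.End ℂ V) => f v) haev
        simpa [Module.End.mul_apply] using this
      have h2 : D ((aeval D t) v) = D 0 := by simpa using h1
      simpa using hD h2
    have hdeg := minpoly.degree_le_of_ne_zero ℂ D htne ht0
    rw [← hm, ht, degree_mul, degree_X, degree_eq_natDegree htne] at hdeg
    have : (1 + (t.natDegree : ℕ) : WithBot ℕ) ≤ (t.natDegree : ℕ) := by
      exact_mod_cast hdeg
    have : (1 + t.natDegree : ℕ) ≤ t.natDegree := by exact_mod_cast this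
    omega
  -- Lagrange interpolation of a cube root on the roots of m
  have hcube : ∀ z : ℂ, ∃ c : ℂ, c ^ 3 = z := fun z =>
    IsAlgClosed.exists_pow_nat_eq z (n := 3) (by norm_num)
  set cr : ℂ → ℂ := fun z => Classical.choose (hcube z) with hcr_def
  have hcr : ∀ z : ℂ, (cr z) ^ 3 = z := fun z => Classical.choose_spec (hcube z)
  set q : ℂ[X] := Lagrange.interpolate m.roots.toFinset id cr with hq_def
  have hqroot : ∀ lam ∈ m.roots.toFinset, (X - C lam) ∣ q ^ 3 - X := by
    intro lam hl
    rw [dvd_iff_isRoot]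
    have hev : q.eval lam = cr lam := by
      have := Lagrange.eval_interpolate_at_node (s := m.roots.toFinset) (v := id)
        cr (Set.injOn_id _) hl
      rw [hq_def]; simpa using this
    simp [IsRoot, eval_pow, hev, hcr lam]
  have hrad : (∏ lam ∈ m.roots.toFinset, (X - C lam)) ∣ q ^ 3 - X := by
    apply Finset.prod_dvd_of_coprime _ hqroot
    exact (pairwise_coprime_X_sub_C Function.injective_id).set_pairwise _
  set K := Multiset.card m.roots with hK
  have hsplit : m = (m.roots.map fun a => X - C a).prod :=
    (IsAlgClosed.splits m).eq_prod_roots_of_monic hmonic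
  have hmdvd : m ∣ (q ^ 3 - X) ^ K := by
    calc m = (Multiset.map (fun a => X - C a) m.roots).prod := hsplit
    _ = ∏ lam ∈ m.roots.toFinset, (X - C lam) ^ (m.roots.count lam) :=
          Finset.prod_multiset_map_count _ _
    _ ∣ ∏ lam ∈ m.roots.toFinset, (X - C lam) ^ K :=
          Finset.prod_dvd_prod_of_dvd _ _
            (fun lam _ => pow_dvd_pow _ (Multiset.count_le_card _ _))
    _ = (∏ lam ∈ m.roots.toFinset, (X - C lam)) ^ K := Finset.prod_pow _ _ _
    _ ∣ (q ^ 3 - X) ^ K := pow_dvd_pow_of_dvd hrad K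
  -- pass to the commutative quotient ring ℂ[X]/(m)
  set I : Ideal ℂ[X] := Ideal.span {m} with hI
  set π : ℂ[X] →+* ℂ[X] ⧸ I := Ideal.Quotient.mk I with hπ
  have hπm : π m = 0 :=
    Ideal.Quotient.eq_zero_iff_mem.mpr (Ideal.mem_span_singleton_self m)
  set x : ℂ[X] ⧸ I := π X with hx
  obtain ⟨t, ht⟩ : X ∣ m - C (m.coeff 0) := X_dvd_iff.mpr (by simp)
  have hC1 : C (m.coeff 0)⁻¹ * C (m.coeff 0) = (1 : ℂ[X]) := by
    rw [← C_mul, inv_mul_cancel₀ hm0, C_1]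
  have hkeyinv : X * (C (m.coeff 0)⁻¹ * (-t)) = 1 - C (m.coeff 0)⁻¹ * m := by
    linear_combination C (m.coeff 0)⁻¹ * ht + hC1
  set y : ℂ[X] ⧸ I := π (C (m.coeff 0)⁻¹ * (-t)) with hy
  have hxy : x * y = 1 := by
    rw [hx, hy, ← map_mul, hkeyinv, map_sub, map_one, map_mul, hπm, mul_zero, sub_zero]
  set n0 : ℂ[X] ⧸ I := π (q ^ 3 - X) with hn0def
  have hn0 : n0 ^ K = 0 := by
    rw [hn0def, ← map_pow]
    exact Ideal.Quotient.eq_zero_iff_mem.mpr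
      (Ideal.mem_span_singleton.mpr hmdvd)
  set n : ℂ[X] ⧸ I := n0 * y with hndef
  have hnK : n ^ (K + 1) = 0 := by
    rw [hndef, mul_pow, pow_succ, mul_assoc, hn0]
    ring
  have hqq : (π q) ^ 3 = x + n0 := by
    rw [hn0def, hx, ← map_pow, ← map_add]
    congr 1
    ring
  have hu1 : IsUnit (1 + n) := IsNilpotent.isUnit_one_add ⟨K + 1, hnK⟩
  obtain ⟨z, hz⟩ := hu1.exists_right_inv
  have hzn : z - 1 = -(n * z) := by linear_combination hz
  have hz1 : (z - 1) ^ (K + 1 + 1) = 0 := by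
    rw [hzn]
    have hexp : (-(n * z)) ^ (K + 1 + 1) =
        n ^ (K + 1) * (n * z ^ (K + 1 + 1) * (-1) ^ (K + 1 + 1)) := by ring
    rw [hexp, hnK, zero_mul]
  obtain ⟨s0, hs0⟩ := nilpotent_cbrt (z - 1) (K + 1) hz1
  have hs0' : s0 ^ 3 = z := by rw [hs0]; ring
  obtain ⟨p, hp⟩ := Ideal.Quotient.mk_surjective (π q * s0)
  have hx1n : x * (1 + n) = (π q) ^ 3 := by
    rw [hqq, hndef]
    linear_combination n0 * hxy
  have hr3 : (π p) ^ 3 = x := by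
    calc (π p) ^ 3 = (π q * s0) ^ 3 := by rw [show π p = π q * s0 from hp]
    _ = (π q) ^ 3 * z := by rw [mul_pow, hs0']
    _ = (x * (1 + n)) * z := by rw [hx1n]
    _ = x * ((1 + n) * z) := by ring
    _ = x := by rw [hz, mul_one]
  have hπ0 : π (p ^ 3 - X) = 0 := by
    rw [map_sub, map_pow, hr3, hx, sub_self]
  obtain ⟨c, hc⟩ := Ideal.mem_span_singleton.mp (Ideal.Quotient.eq_zero_iff_mem.mp hπ0)
  refine ⟨p, ?_⟩
  have h2 : (aeval D p) ^ 3 - D = 0 := by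
    have := congrArg (aeval D) hc
    simp only [map_sub, map_pow, aeval_X, map_mul] at this
    rw [this, hm, minpoly.aeval, zero_mul]
  exact sub_eq_zero.mp h2

lemma aeval_bilin_symm {V : Type*} [AddCommGroup V] [Module ℂ V]
    (B : LinearMap.BilinForm ℂ V) (D : Module.End ℂ V)
    (hsym : ∀ x y, B (D x) y = B x (D y)) (p : ℂ[X]) :
    ∀ x y, B (aeval D p x) y = B x (aeval D p y) := by
  have hpow : ∀ (j : ℕ) (x y : V), B ((D ^ j) x) y = B x ((D ^ j) y) := by
    intro j
    induction j with
    | zero => intro x y; simp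
    | succ j ih =>
      intro x y
      have h1 : (D ^ (j + 1)) x = (D ^ j) (D x) := by
        rw [pow_succ, Module.End.mul_apply]
      have h2 : (D ^ (j + 1)) y = D ((D ^ j) y) := by
        rw [pow_succ', Module.End.mul_apply]
      rw [h1, h2, ih (D x) y, hsym]
  intro x y
  induction p using Polynomial.induction_on' with
  | add f g hf hg => simp only [map_add, LinearMap.add_apply, hf, hg]
  | monomial j r =>
    simp only [aeval_monomial, Module.End.mul_apply, Module.algebraMap_end_apply,
      map_smul, LinearMap.smul_apply, smul_eq_mul, hpow]

lemma aeval_bracket {V : Type*} [LieRing V] [LieAlgebra ℂ V]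
    (D : Module.End ℂ V) (hbr : ∀ x y : V, D ⁅x, y⁆ = ⁅D x, y⁆) (p : ℂ[X]) :
    ∀ x y : V, (aeval D p) ⁅x, y⁆ = ⁅(aeval D p) x, y⁆ := by
  have hpow : ∀ (j : ℕ) (x y : V), (D ^ j) ⁅x, y⁆ = ⁅(D ^ j) x, y⁆ := by
    intro j
    induction j with
    | zero => intro x y; simp
    | succ j ih =>
      intro x y
      have h1 : ∀ v : V, (D ^ (j + 1)) v = (D ^ j) (D v) := by
        intro v; rw [pow_succ, Module.End.mul_apply]
      rw [h1, h1, hbr, ih]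
  intro x y
  induction p using Polynomial.induction_on' with
  | add f g hf hg => simp only [map_add, LinearMap.add_apply, hf, hg, add_lie]
  | monomial j r =>
    simp only [aeval_monomial, Module.End.mul_apply, Module.algebraMap_end_apply,
      LinearMap.map_smul, hpow, smul_lie]

/-- The dup-number is invariant under Lie algebra isomorphism: if two
non-Abelian quadratic Lie algebras `(g,B)` and `(g',B')` are isomorphic as complex Lie
algebras, then `dup(g) = dup(g')`. -/
theorem dup_invariant_under_isomorphism
    {g g' : Type*} [LieRing g] [LieAlgebra ℂ g] [Module.Finite ℂ g]
    [LieRing g'] [LieAlgebra ℂ g'] [Module.Finite ℂ g']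
    (B : LinearMap.BilinForm ℂ g) (B' : LinearMap.BilinForm ℂ g')
    (hsymm : ∀ x y : g, B x y = B y x)
    (hnondeg : B.Nondegenerate)
    (hinv : ∀ x y z : g, B ⁅x, y⁆ z = B x ⁅y, z⁆)
    (hsymm' : ∀ x y : g', B' x y = B' y x)
    (hnondeg' : B'.Nondegenerate)
    (hinv' : ∀ x y z : g', B' ⁅x, y⁆ z = B' x ⁅y, z⁆)
    (hnonabelian : ¬ ∀ x y : g, ⁅x, y⁆ = 0)
    (hnonabelian' : ¬ ∀ x y : g', ⁅x, y⁆ = 0)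
    (hiso : Nonempty (g ≃ₗ⁅ℂ⁆ g')) :
    dup B = dup B' := by
  classical
  obtain ⟨e⟩ := hiso
  push_neg at hnonabelian'
  obtain ⟨x₀, y₀, hx0⟩ := hnonabelian'
  haveI : Nontrivial g' := nontrivial_of_ne _ _ hx0
  haveI : FiniteDimensional ℂ g' := ‹Module.Finite ℂ g'›
  -- the transported bilinear form on g'
  set f : g' →ₗ[ℂ] g := (e.symm : g' →ₗ⁅ℂ⁆ g).toLinearMap with hfdef
  set B₁ : LinearMap.BilinForm ℂ g' := B.compl₁₂ f f with hB₁def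
  have hB₁ : ∀ x y : g', B₁ x y = B (e.symm x) (e.symm y) := fun x y => rfl
  have hlie : ∀ a b : g', e.symm ⁅a, b⁆ = ⁅e.symm a, e.symm b⁆ := fun a b =>
    LieEquiv.map_lie e.symm a b
  -- Step A : transport dupSubmodule along e
  set ε : g' ≃ₗ[ℂ] g := e.symm.toLinearEquiv with hεdef
  have hεap : ∀ v : g', ε v = e.symm v := fun _ => rfl
  have hmap1 : (dupSubmodule B).map
      (ε.dualMap : Module.Dual ℂ g →ₗ[ℂ] Module.Dual ℂ g') = dupSubmodule B₁ := by
    apply le_antisymm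
    · rintro β ⟨α, hα, rfl⟩
      rw [mem_dupSubmodule]
      intro X Y Z T
      have h := (mem_dupSubmodule.mp hα) (e.symm X) (e.symm Y) (e.symm Z) (e.symm T)
      simp only [LinearEquiv.coe_coe, LinearEquiv.dualMap_apply, hεap, hB₁, hlie]
      exact h
    · intro β hβ
      refine ⟨β.comp (e.toLinearEquiv : g →ₗ[ℂ] g'), ?_, ?_⟩
      · rw [SetLike.mem_coe, mem_dupSubmodule]
        intro X Y Z T
        have h := (mem_dupSubmodule.mp hβ) (e X) (e Y) (e Z) (e T)
        simp only [hB₁, hlie, LieEquiv.symm_apply_apply] at h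
        simpa using h
      · apply LinearMap.ext
        intro v
        simp [LinearEquiv.dualMap_apply, hεap]
  have step1 : dup B = Module.finrank ℂ (dupSubmodule B₁) := by
    rw [dup, ← hmap1, LinearEquiv.finrank_map_eq]
  -- Step B : B₁ is symmetric, invariant, nondegenerate
  have hsymm₁ : ∀ x y : g', B₁ x y = B₁ y x := fun x y => by
    rw [hB₁, hB₁, hsymm]
  have hinv₁ : ∀ x y z : g', B₁ ⁅x, y⁆ z = B₁ x ⁅y, z⁆ := by
    intro x y z
    rw [hB₁, hB₁, hlie, hlie]
    exact hinv _ _ _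
  have hnondeg₁ : B₁.Nondegenerate := by
    have hleft : B₁.SeparatingLeft := by
      intro v hv
      have h1 : ∀ w : g, B (e.symm v) w = 0 := by
        intro w
        have := hv (e w)
        rwa [hB₁, LieEquiv.symm_apply_apply] at this
      have h0 : e.symm v = 0 := hnondeg.1 _ h1
      exact ε.map_eq_zero_iff.mp (by rw [hεap]; exact h0)
    exact ⟨hleft, fun v hv => hleft v (fun w => by rw [hsymm₁]; exact hv w)⟩
  -- the operator D with B₁ (D x) y = B' x y
  set bD : g' ≃ₗ[ℂ] Module.Dual ℂ g' := B₁.toDual hnondeg₁ with hbDdef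
  set D : Module.End ℂ g' :=
    (bD.symm : Module.Dual ℂ g' →ₗ[ℂ] g') ∘ₗ (B' : g' →ₗ[ℂ] Module.Dual ℂ g') with hDdef
  have hD : ∀ x y : g', B₁ (D x) y = B' x y := by
    intro x y
    have h1 : bD (D x) = B' x := by
      rw [hDdef]
      simp
    have h2 : bD (D x) y = B₁ (D x) y := LinearMap.BilinForm.toDual_def hnondeg₁
    rw [← h2, h1]
  have hDinj : Function.Injective D := by
    intro a b hab
    have h1 : ∀ w : g', B' (a - b) w = 0 := by
      intro w
      rw [map_sub, LinearMap.sub_apply, ← hD, ← hD, hab, sub_self]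
    have := hnondeg'.1 _ h1
    exact sub_eq_zero.mp this
  have hB₁ext : ∀ u v : g', (∀ w, B₁ u w = B₁ v w) → u = v := by
    intro u v huv
    have h1 : ∀ w, B₁ (u - v) w = 0 := by
      intro w
      rw [map_sub, LinearMap.sub_apply, huv, sub_self]
    exact sub_eq_zero.mp (hnondeg₁.1 _ h1)
  have hDbr : ∀ x y : g', D ⁅x, y⁆ = ⁅D x, y⁆ := by
    intro x y
    apply hB₁ext
    intro w
    rw [hD, hinv', ← hD, ← hinv₁]
  have hDsym : ∀ x y : g', B₁ (D x) y = B₁ x (D y) := by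
    intro x y
    rw [hD, hsymm', ← hD, hsymm₁]
  -- cube root of D
  obtain ⟨p, hp3⟩ := exists_cbrt_poly D hDinj
  set R : Module.End ℂ g' := aeval D p with hRdef
  have hRbr : ∀ x y : g', R ⁅x, y⁆ = ⁅R x, y⁆ := aeval_bracket D hDbr p
  have hRbr2 : ∀ x y : g', R ⁅x, y⁆ = ⁅x, R y⁆ := by
    intro x y
    have h1 : ⁅x, y⁆ = -⁅y, x⁆ := (lie_skew x y).symm
    rw [h1, map_neg, hRbr, ← lie_skew]
    exact neg_neg _
  have hRsym : ∀ x y : g', B₁ (R x) y = B₁ x (R y) := aeval_bilin_symm B₁ D hDsym p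
  have hD3 : ∀ v : g', D v = R (R (R v)) := by
    intro v
    rw [← hp3]
    simp [pow_succ, Module.End.mul_apply]
  have hRinj : Function.Injective R := by
    intro a b hab
    apply hDinj
    rw [hD3, hD3, hab]
  set Re : g' ≃ₗ[ℂ] g' := LinearEquiv.ofInjectiveEndo R hRinj with hRe_def
  have hRe : ∀ v : g', Re v = R v := fun _ => rfl
  have hkey : ∀ x y z : g', B' ⁅x, y⁆ z = B₁ ⁅R x, R y⁆ (R z) := by
    intro x y z
    have h1 : ⁅R x, R y⁆ = R (R ⁅x, y⁆) := by
      rw [← hRbr x (R y), ← hRbr2 x y]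
    rw [h1, ← hRsym, ← hD3, hD]
  have hmap2 : (dupSubmodule B₁).map
      (Re.dualMap : Module.Dual ℂ g' →ₗ[ℂ] Module.Dual ℂ g') = dupSubmodule B' := by
    apply le_antisymm
    · rintro β ⟨α, hα, rfl⟩
      rw [mem_dupSubmodule]
      intro X Y Z T
      have h := (mem_dupSubmodule.mp hα) (R X) (R Y) (R Z) (R T)
      simp only [LinearEquiv.coe_coe, LinearEquiv.dualMap_apply, hRe, hkey]
      exact h
    · intro β hβ
      refine ⟨β.comp (Re.symm : g' →ₗ[ℂ] g'), ?_, ?_⟩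
      · rw [SetLike.mem_coe, mem_dupSubmodule]
        intro X Y Z T
        have h := (mem_dupSubmodule.mp hβ) (Re.symm X) (Re.symm Y) (Re.symm Z) (Re.symm T)
        have hY : ∀ v : g', R (Re.symm v) = v := by
          intro v
          rw [← hRe]
          exact Re.apply_symm_apply v
        simp only [hkey, hY] at h
        simpa using h
      · apply LinearMap.ext
        intro v
        simp [LinearEquiv.dualMap_apply, hRe]
        rw [← hRe]
        simp
  have step2 : Module.finrank ℂ (dupSubmodule B₁) = dup B' := by
    rw [dup, ← hmap2, LinearEquiv.finrank_map_eq]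
  rw [step1, step2]
end
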